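/- Suppose n is an odd positive integer satisfying (1/4)(n+1)² − (n²+1)ρ(n) ≤ 4(0.621·η(n) + 10.596 + 1.216·ω(n)), where ρ(n) = ∑_{p|n} 1/p², η(n) = 2∑_{p|n} log p, and ω(n) is the number of distinct prime divisors. Then n ≤ 21. -/

import Mathlib

lemma tele8 (J : Finset ℕ) (hJ : ∀ j ∈ J, 8 ≤ j) :
    ∑ j ∈ J, ((1:ℝ)/(j:ℝ) - 1/((j:ℝ)+1)) ≤ 1/8 := by
  classical
  set N := J.sup id with hN
  have hsub : J ⊆ Finset.Icc 8 N := fun j hj =>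
    Finset.mem_Icc.mpr ⟨hJ j hj, Finset.le_sup (f := id) hj⟩
  have h1 : ∑ j ∈ J, ((1:ℝ)/(j:ℝ) - 1/((j:ℝ)+1))
      ≤ ∑ j ∈ Finset.Icc 8 N, ((1:ℝ)/(j:ℝ) - 1/((j:ℝ)+1)) := by
    apply Finset.sum_le_sum_of_subset_of_nonneg hsub
    intro i hi _
    have h8 : 8 ≤ i := (Finset.mem_Icc.mp hi).1
    have hi0 : (0:ℝ) < (i:ℝ) := by
      have : 0 < i := by omega
      exact_mod_cast this
    have : (1:ℝ)/((i:ℝ)+1) ≤ 1/(i:ℝ) := one_div_le_one_div_of_le hi0 (by linarith)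
    linarith
  refine h1.trans ?_
  rw [← Finset.Ico_add_one_right_eq_Icc, Finset.sum_Ico_eq_sum_range]
  calc ∑ k ∈ Finset.range (N+1-8), ((1:ℝ)/((8+k:ℕ):ℝ) - 1/(((8+k:ℕ):ℝ)+1))
      = ∑ k ∈ Finset.range (N+1-8),
          ((fun i => (1:ℝ)/((8+i:ℕ):ℝ)) k - (fun i => (1:ℝ)/((8+i:ℕ):ℝ)) (k+1)) := by
        refine Finset.sum_congr rfl fun k _ => ?_
        simp only
        push_cast
        ring
    _ = (1:ℝ)/((8+0:ℕ):ℝ) - 1/((8+(N+1-8):ℕ):ℝ) := Finset.sum_range_sub' _ _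
    _ ≤ 1/8 := by
        have h0 : (0:ℝ) ≤ 1/((8+(N+1-8):ℕ):ℝ) := by positivity
        norm_num
        linarith

lemma tail_bound (T : Finset ℕ) (h17 : ∀ k ∈ T, 17 ≤ k) (hoddT : ∀ k ∈ T, Odd k) :
    ∑ k ∈ T, (1:ℝ)/(k:ℝ)^2 ≤ 1/32 := by
  classical
  set J := T.image (fun k => (k-1)/2) with hJdef
  have hinj : ∀ x ∈ T, ∀ y ∈ T, (fun k => (k-1)/2) x = (fun k => (k-1)/2) y → x = y := by
    intro x hx y hy h
    obtain ⟨a, ha⟩ := hoddT x hx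
    obtain ⟨b, hb⟩ := hoddT y hy
    have h' : (x-1)/2 = (y-1)/2 := h
    omega
  have heq : ∑ k ∈ T, (1:ℝ)/(k:ℝ)^2 = ∑ j ∈ J, (1:ℝ)/((2*j+1:ℕ):ℝ)^2 := by
    rw [hJdef, Finset.sum_image hinj]
    refine Finset.sum_congr rfl fun k hk => ?_
    obtain ⟨a, ha⟩ := hoddT k hk
    have h2 : 2 * ((k-1)/2) + 1 = k := by omega
    rw [h2]
  rw [heq]
  have h8 : ∀ j ∈ J, 8 ≤ j := by
    intro j hj
    obtain ⟨k, hk, rfl⟩ := Finset.mem_image.mp hj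
    have := h17 k hk
    omega
  have step : ∀ j ∈ J,
      (1:ℝ)/((2*j+1:ℕ):ℝ)^2 ≤ 1/4 * ((1:ℝ)/(j:ℝ) - 1/((j:ℝ)+1)) := by
    intro j hj
    have hj8 : (8:ℝ) ≤ (j:ℝ) := by exact_mod_cast h8 j hj
    have hj0 : (0:ℝ) < (j:ℝ) := by linarith
    have h1 : (1:ℝ)/(j:ℝ) - 1/((j:ℝ)+1) = 1/((j:ℝ)*((j:ℝ)+1)) := by
      field_simp
      ring
    have h2 : ((2*j+1:ℕ):ℝ) = 2*(j:ℝ)+1 := by push_cast; ring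
    rw [h1, h2, one_div_mul_one_div]
    apply one_div_le_one_div_of_le (by nlinarith)
    nlinarith
  have s1 : ∑ j ∈ J, (1:ℝ)/((2*j+1:ℕ):ℝ)^2
      ≤ ∑ j ∈ J, (1/4:ℝ) * ((1:ℝ)/(j:ℝ) - 1/((j:ℝ)+1)) :=
    Finset.sum_le_sum step
  have s2 : ∑ j ∈ J, (1/4:ℝ) * ((1:ℝ)/(j:ℝ) - 1/((j:ℝ)+1))
      = 1/4 * ∑ j ∈ J, ((1:ℝ)/(j:ℝ) - 1/((j:ℝ)+1)) :=
    (Finset.mul_sum _ _ _).symm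
  have s3 := tele8 J h8
  rw [s2] at s1
  linarith

lemma rho_bound (n : ℕ) (hoddn : Odd n) :
    ∑ p ∈ n.primeFactors, (1:ℝ)/(p:ℝ)^2 ≤ 1/9+1/25+1/49+1/121+1/169+1/32 := by
  classical
  have hop : ∀ p ∈ n.primeFactors, Nat.Prime p ∧ Odd p := by
    intro p hp
    have hp' := Nat.prime_of_mem_primeFactors hp
    refine ⟨hp', ?_⟩
    rcases hp'.eq_two_or_odd' with h2 | h
    · subst h2
      have h2n : 2 ∣ n := Nat.dvd_of_mem_primeFactors hp
      rw [Nat.odd_iff] at hoddn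
      omega
    · exact h
  rw [← Finset.sum_filter_add_sum_filter_not n.primeFactors (fun p => p ≤ 16)]
  have hA : ∑ p ∈ n.primeFactors.filter (fun p => p ≤ 16), (1:ℝ)/(p:ℝ)^2
      ≤ ∑ p ∈ ({3,5,7,11,13} : Finset ℕ), (1:ℝ)/(p:ℝ)^2 := by
    apply Finset.sum_le_sum_of_subset_of_nonneg
    · intro p hp
      rw [Finset.mem_filter] at hp
      obtain ⟨hp1, hp2⟩ := hp
      obtain ⟨hpp, hpo⟩ := hop p hp1
      have h2 := hpp.two_le
      interval_cases p <;>
        first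
          | decide
          | (exact absurd hpp (by decide))
          | (exact absurd hpo (by decide))
    · intro i _ _
      positivity
  have hB : ∑ p ∈ n.primeFactors.filter (fun p => ¬ p ≤ 16), (1:ℝ)/(p:ℝ)^2 ≤ 1/32 := by
    apply tail_bound
    · intro k hk
      rw [Finset.mem_filter] at hk
      omega
    · intro k hk
      rw [Finset.mem_filter] at hk
      exact (hop k hk.1).2
  have hC : ∑ p ∈ ({3,5,7,11,13} : Finset ℕ), (1:ℝ)/(p:ℝ)^2
      = 1/9+1/25+1/49+1/121+1/169 := by
    rw [Finset.sum_insert (by decide), Finset.sum_insert (by decide),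
      Finset.sum_insert (by decide), Finset.sum_insert (by decide), Finset.sum_singleton]
    norm_num
  linarith

lemma log_le_of_le_pow {x : ℝ} (k : ℕ) (hx : 0 < x) (h : x ≤ 2.7182818 ^ k) :
    Real.log x ≤ (k : ℝ) := by
  rw [Real.log_le_iff_le_exp hx]
  refine h.trans ?_
  have h1 : Real.exp ((k:ℝ)) = Real.exp 1 ^ k := by
    rw [← Real.exp_nat_mul]
    norm_num
  rw [h1]
  exact pow_le_pow_left₀ (by norm_num) (le_of_lt (by linarith [Real.exp_one_gt_d9])) k

lemma log_le_four {x : ℝ} (hx : 0 < x) (h : x ≤ 54) : Real.log x ≤ 4 := by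
  have := log_le_of_le_pow 4 hx (by norm_num; linarith)
  norm_num at this
  exact this

lemma log_le_five {x : ℝ} (hx : 0 < x) (h : x ≤ 140) : Real.log x ≤ 5 := by
  have := log_le_of_le_pow 5 hx (by norm_num; linarith)
  norm_num at this
  exact this

lemma sum_log_le (n : ℕ) (hn : 0 < n) :
    ∑ p ∈ n.primeFactors, Real.log p ≤ Real.log n := by
  have hne : ∀ p ∈ n.primeFactors, ((p:ℝ)) ≠ 0 := by
    intro p hp
    have := (Nat.prime_of_mem_primeFactors hp).pos
    positivity
  rw [← Real.log_prod hne]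
  have h1 : (∏ p ∈ n.primeFactors, (p:ℝ)) = ((∏ p ∈ n.primeFactors, p : ℕ):ℝ) := by
    push_cast
    rfl
  rw [h1]
  have h2 : (∏ p ∈ n.primeFactors, p) ≤ n := Nat.le_of_dvd hn (Nat.prod_primeFactors_dvd n)
  have h3 : 0 < ∏ p ∈ n.primeFactors, p :=
    Finset.prod_pos fun p hp => (Nat.prime_of_mem_primeFactors hp).pos
  exact Real.log_le_log (by exact_mod_cast h3) (by exact_mod_cast h2)
set_option maxHeartbeats 1000000 in
theorem stmt_15 (n : ℕ) (hn : 0 < n) (hodd : Odd n)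
    (hineq : ((n : ℝ) + 1) ^ 2 / 4
        - ((n : ℝ) ^ 2 + 1) * ∑ p ∈ n.primeFactors, (1 : ℝ) / (p : ℝ) ^ 2
      ≤ 4 * (0.621 * (2 * ∑ p ∈ n.primeFactors, Real.log p)
        + 10.596 + 1.216 * (n.primeFactors.card : ℝ))) :
    n ≤ 21 := by
  by_contra hle
  push_neg at hle
  rcases lt_or_ge n 44 with hsmall | hbig
  · -- small cases 22 ≤ n ≤ 43
    have h22 : 22 ≤ n := hle
    interval_cases n
    · exact absurd hodd (by decide)
    · -- 23
      have hf : (23:ℕ).primeFactors = {23} := Nat.Prime.primeFactors (by norm_num)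
      simp only [hf, Finset.sum_singleton, Finset.card_singleton] at hineq
      have l1 : Real.log ((23:ℕ):ℝ) ≤ 4 := log_le_four (by norm_num) (by norm_num)
      norm_num at hineq l1
      linarith
    · exact absurd hodd (by decide)
    · -- 25
      have hf : (25:ℕ).primeFactors = {5} := by
        rw [show (25:ℕ) = 5^2 from rfl, Nat.primeFactors_pow 5 (by norm_num),
          Nat.Prime.primeFactors (by norm_num)]
      simp only [hf, Finset.sum_singleton, Finset.card_singleton] at hineq
      have l1 : Real.log ((5:ℕ):ℝ) ≤ 4 := log_le_four (by norm_num) (by norm_num)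
      norm_num at hineq l1
      linarith
    · exact absurd hodd (by decide)
    · -- 27
      have hf : (27:ℕ).primeFactors = {3} := by
        rw [show (27:ℕ) = 3^3 from rfl, Nat.primeFactors_pow 3 (by norm_num),
          Nat.Prime.primeFactors (by norm_num)]
      simp only [hf, Finset.sum_singleton, Finset.card_singleton] at hineq
      have l1 : Real.log ((3:ℕ):ℝ) ≤ 4 := log_le_four (by norm_num) (by norm_num)
      norm_num at hineq l1
      linarith
    · exact absurd hodd (by decide)
    · -- 29
      have hf : (29:ℕ).primeFactors = {29} := Nat.Prime.primeFactors (by norm_num)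
      simp only [hf, Finset.sum_singleton, Finset.card_singleton] at hineq
      have l1 : Real.log ((29:ℕ):ℝ) ≤ 4 := log_le_four (by norm_num) (by norm_num)
      norm_num at hineq l1
      linarith
    · exact absurd hodd (by decide)
    · -- 31
      have hf : (31:ℕ).primeFactors = {31} := Nat.Prime.primeFactors (by norm_num)
      simp only [hf, Finset.sum_singleton, Finset.card_singleton] at hineq
      have l1 : Real.log ((31:ℕ):ℝ) ≤ 4 := log_le_four (by norm_num) (by norm_num)
      norm_num at hineq l1
      linarith
    · exact absurd hodd (by decide)
    · -- 33
      have hf : (33:ℕ).primeFactors = {3, 11} := by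
        rw [show (33:ℕ) = 3*11 from rfl, Nat.primeFactors_mul (by norm_num) (by norm_num),
          Nat.Prime.primeFactors (by norm_num), Nat.Prime.primeFactors (by norm_num)]
        decide
      simp only [hf, Finset.sum_insert (show (3:ℕ) ∉ ({11} : Finset ℕ) by decide),
        Finset.sum_singleton,
        Finset.card_insert_of_notMem (show (3:ℕ) ∉ ({11} : Finset ℕ) by decide),
        Finset.card_singleton] at hineq
      have l1 : Real.log ((3:ℕ):ℝ) ≤ 4 := log_le_four (by norm_num) (by norm_num)
      have l2 : Real.log ((11:ℕ):ℝ) ≤ 4 := log_le_four (by norm_num) (by norm_num)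
      norm_num at hineq l1 l2
      linarith
    · exact absurd hodd (by decide)
    · -- 35
      have hf : (35:ℕ).primeFactors = {5, 7} := by
        rw [show (35:ℕ) = 5*7 from rfl, Nat.primeFactors_mul (by norm_num) (by norm_num),
          Nat.Prime.primeFactors (by norm_num), Nat.Prime.primeFactors (by norm_num)]
        decide
      simp only [hf, Finset.sum_insert (show (5:ℕ) ∉ ({7} : Finset ℕ) by decide),
        Finset.sum_singleton,
        Finset.card_insert_of_notMem (show (5:ℕ) ∉ ({7} : Finset ℕ) by decide),
        Finset.card_singleton] at hineq
      have l1 : Real.log ((5:ℕ):ℝ) ≤ 4 := log_le_four (by norm_num) (by norm_num)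
      have l2 : Real.log ((7:ℕ):ℝ) ≤ 4 := log_le_four (by norm_num) (by norm_num)
      norm_num at hineq l1 l2
      linarith
    · exact absurd hodd (by decide)
    · -- 37
      have hf : (37:ℕ).primeFactors = {37} := Nat.Prime.primeFactors (by norm_num)
      simp only [hf, Finset.sum_singleton, Finset.card_singleton] at hineq
      have l1 : Real.log ((37:ℕ):ℝ) ≤ 4 := log_le_four (by norm_num) (by norm_num)
      norm_num at hineq l1
      linarith
    · exact absurd hodd (by decide)
    · -- 39
      have hf : (39:ℕ).primeFactors = {3, 13} := by
        rw [show (39:ℕ) = 3*13 from rfl, Nat.primeFactors_mul (by norm_num) (by norm_num),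
          Nat.Prime.primeFactors (by norm_num), Nat.Prime.primeFactors (by norm_num)]
        decide
      simp only [hf, Finset.sum_insert (show (3:ℕ) ∉ ({13} : Finset ℕ) by decide),
        Finset.sum_singleton,
        Finset.card_insert_of_notMem (show (3:ℕ) ∉ ({13} : Finset ℕ) by decide),
        Finset.card_singleton] at hineq
      have l1 : Real.log ((3:ℕ):ℝ) ≤ 4 := log_le_four (by norm_num) (by norm_num)
      have l2 : Real.log ((13:ℕ):ℝ) ≤ 4 := log_le_four (by norm_num) (by norm_num)
      norm_num at hineq l1 l2
      linarith
    · exact absurd hodd (by decide)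
    · -- 41
      have hf : (41:ℕ).primeFactors = {41} := Nat.Prime.primeFactors (by norm_num)
      simp only [hf, Finset.sum_singleton, Finset.card_singleton] at hineq
      have l1 : Real.log ((41:ℕ):ℝ) ≤ 4 := log_le_four (by norm_num) (by norm_num)
      norm_num at hineq l1
      linarith
    · exact absurd hodd (by decide)
    · -- 43
      have hf : (43:ℕ).primeFactors = {43} := Nat.Prime.primeFactors (by norm_num)
      simp only [hf, Finset.sum_singleton, Finset.card_singleton] at hineq
      have l1 : Real.log ((43:ℕ):ℝ) ≤ 4 := log_le_four (by norm_num) (by norm_num)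
      norm_num at hineq l1
      linarith
  · -- n ≥ 44, hence n ≥ 45 since n is odd
    have hn45 : 45 ≤ n := by
      have := Nat.odd_iff.mp hodd
      omega
    have hprime : ∀ p ∈ n.primeFactors, Nat.Prime p := fun p hp =>
      Nat.prime_of_mem_primeFactors hp
    have h3le : ∀ p ∈ n.primeFactors, 3 ≤ p := by
      intro p hp
      have h2 := (hprime p hp).two_le
      rcases (hprime p hp).eq_two_or_odd' with h2' | ho
      · subst h2'
        have h2n : 2 ∣ n := Nat.dvd_of_mem_primeFactors hp
        have := Nat.odd_iff.mp hodd
        omega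
      · obtain ⟨k, hk⟩ := ho
        omega
    have hρ := rho_bound n hodd
    have hL := sum_log_le n hn
    have hpow : 3 ^ n.primeFactors.card ≤ n := by
      have h1 : 3 ^ n.primeFactors.card = ∏ _p ∈ n.primeFactors, 3 :=
        (Finset.prod_const 3).symm
      have h2 : ∏ _p ∈ n.primeFactors, 3 ≤ ∏ p ∈ n.primeFactors, p :=
        Finset.prod_le_prod' h3le
      have h3 : (∏ p ∈ n.primeFactors, p) ≤ n :=
        Nat.le_of_dvd hn (Nat.prod_primeFactors_dvd n)
      omega
    have hprod : ((n:ℝ)^2+1) * (∑ p ∈ n.primeFactors, (1:ℝ)/(p:ℝ)^2)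
        ≤ ((n:ℝ)^2+1) * (1/9+1/25+1/49+1/121+1/169+1/32) :=
      mul_le_mul_of_nonneg_left hρ (by positivity)
    have key : ((n:ℝ)+1)^2/4 - ((n:ℝ)^2+1) * (1/9+1/25+1/49+1/121+1/169+1/32)
        ≤ 4 * (0.621 * (2 * Real.log n) + 10.596 + 1.216 * (n.primeFactors.card : ℝ)) := by
      nlinarith [hineq, hprod, hL]
    have hn45R : (45:ℝ) ≤ (n:ℝ) := by exact_mod_cast hn45
    rcases le_or_gt n 140 with hmed | hbig2
    · -- medium: 45 ≤ n ≤ 140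
      have hω : n.primeFactors.card ≤ 4 := by
        by_contra hc
        push_neg at hc
        have : 3^5 ≤ 3 ^ n.primeFactors.card := Nat.pow_le_pow_right (by norm_num) hc
        omega
      have hωR : (n.primeFactors.card : ℝ) ≤ 4 := by exact_mod_cast hω
      have hlogn : Real.log n ≤ 5 := log_le_five (by positivity) (by exact_mod_cast hmed)
      nlinarith [key, hlogn, hωR, hn45R, sq_nonneg ((n:ℝ) - 45)]
    · -- big: n ≥ 141
      have hn141R : (141:ℝ) ≤ (n:ℝ) := by exact_mod_cast hbig2
      have hn0R : (0:ℝ) < (n:ℝ) := by linarith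
      have hlogn : Real.log n ≤ 2*((n:ℝ)/9) - 2 := by
        have h1 : Real.log (n:ℝ) = 2 * Real.log (Real.sqrt n) := by
          rw [Real.log_sqrt hn0R.le]
          ring
        have h2 : Real.log (Real.sqrt n) ≤ Real.sqrt n - 1 :=
          Real.log_le_sub_one_of_pos (Real.sqrt_pos.mpr hn0R)
        have h3 : Real.sqrt n ≤ (n:ℝ)/9 := by
          rw [show ((n:ℝ)/9) = Real.sqrt (((n:ℝ)/9)^2) from (Real.sqrt_sq (by positivity)).symm]
          apply Real.sqrt_le_sqrt
          nlinarith
        linarith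
      have hω : (n.primeFactors.card : ℝ) ≤ Real.log n := by
        have h1 : ((3:ℝ) ^ n.primeFactors.card) ≤ (n:ℝ) := by exact_mod_cast hpow
        have h2 : (n.primeFactors.card : ℝ) * Real.log 3 ≤ Real.log n := by
          rw [← Real.log_pow]
          exact Real.log_le_log (by positivity) h1
        have h3 : (1:ℝ) ≤ Real.log 3 := by
          have h5 := Real.log_le_log (Real.exp_pos 1)
            (show Real.exp 1 ≤ 3 by linarith [Real.exp_one_lt_d9])
          rwa [Real.log_exp] at h5
        have h4 : (0:ℝ) ≤ (n.primeFactors.card : ℝ) := by positivity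
        calc (n.primeFactors.card : ℝ) = (n.primeFactors.card : ℝ) * 1 := by ring
          _ ≤ (n.primeFactors.card : ℝ) * Real.log 3 := mul_le_mul_of_nonneg_left h3 h4
          _ ≤ Real.log n := h2
      nlinarith [key, hlogn, hω, hn141R, sq_nonneg ((n:ℝ) - 141)]
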